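/- Define β_k = k/(k+3) and a_t = 3/(t+3). For integers k ≥ 3 and 1 ≤ t ≤ k-2, with σ_2(k,t) = ∑_{j=0}^{t-1} a_{k-t-1+j} · (t-j) · ∏_{i=0}^{j-1} β_{k-t-1+i}, it holds that σ_2(k,t) ≥ t²/(k+2). -/

import Mathlib

noncomputable def beta (n : ℕ) : ℝ := n / (n + 3)

noncomputable def aseq (n : ℕ) : ℝ := 3 / (n + 3)

noncomputable def sigma2 (k t : ℕ) : ℝ :=
  ∑ j ∈ Finset.range t,
    aseq (k - t - 1 + j) * ((t : ℝ) - j) * ∏ i ∈ Finset.range j, beta (k - t - 1 + i)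

lemma prod_beta (m : ℕ) (hm : 1 ≤ m) (j : ℕ) :
    ∏ i ∈ Finset.range j, beta (m + i) =
      ((m : ℝ) * ((m : ℝ) + 1) * ((m : ℝ) + 2)) /
        (((m : ℝ) + j) * ((m : ℝ) + j + 1) * ((m : ℝ) + j + 2)) := by
  have hm' : (1 : ℝ) ≤ (m : ℝ) := by exact_mod_cast hm
  induction j with
  | zero =>
      simp
      field_simp
  | succ n ih =>
      have hn : (0 : ℝ) ≤ (n : ℝ) := Nat.cast_nonneg n
      have h1 : ((m : ℝ) + n) ≠ 0 := by positivity
      have h2 : ((m : ℝ) + n + 1) ≠ 0 := by positivity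
      have h3 : ((m : ℝ) + n + 2) ≠ 0 := by positivity
      have h4 : ((m : ℝ) + n + 3) ≠ 0 := by positivity
      rw [Finset.prod_range_succ, ih]
      unfold beta
      push_cast
      field_simp
      ring

lemma tele (m : ℕ) (hm : 1 ≤ m) (n : ℕ) :
    ∑ j ∈ Finset.range n, aseq (m + j) * ∏ i ∈ Finset.range j, beta (m + i) =
      1 - ((m : ℝ) * ((m : ℝ) + 1) * ((m : ℝ) + 2)) /
        (((m : ℝ) + n) * ((m : ℝ) + n + 1) * ((m : ℝ) + n + 2)) := by
  have hm' : (1 : ℝ) ≤ (m : ℝ) := by exact_mod_cast hm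
  induction n with
  | zero =>
      simp
      field_simp
      ring
  | succ n ih =>
      have hn : (0 : ℝ) ≤ (n : ℝ) := Nat.cast_nonneg n
      have h1 : ((m : ℝ) + n) ≠ 0 := by positivity
      have h2 : ((m : ℝ) + n + 1) ≠ 0 := by positivity
      have h3 : ((m : ℝ) + n + 2) ≠ 0 := by positivity
      have h4 : ((m : ℝ) + n + 3) ≠ 0 := by positivity
      rw [Finset.sum_range_succ, ih, prod_beta m hm]
      unfold aseq
      push_cast
      field_simp
      ring

lemma sum_closed (m : ℕ) (hm : 1 ≤ m) (t : ℕ) :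
    ∑ j ∈ Finset.range t,
        aseq (m + j) * ((t : ℝ) - j) * ∏ i ∈ Finset.range j, beta (m + i) =
      (t : ℝ) - (m : ℝ) / 2 +
        ((m : ℝ) * ((m : ℝ) + 1) * ((m : ℝ) + 2)) /
          (2 * ((m : ℝ) + t + 1) * ((m : ℝ) + t + 2)) := by
  have hm' : (1 : ℝ) ≤ (m : ℝ) := by exact_mod_cast hm
  induction t with
  | zero =>
      simp
      field_simp
      ring
  | succ t ih =>
      have hn : (0 : ℝ) ≤ (t : ℝ) := Nat.cast_nonneg t
      have h1 : ((m : ℝ) + t + 1) ≠ 0 := by positivity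
      have h2 : ((m : ℝ) + t + 2) ≠ 0 := by positivity
      have h3 : ((m : ℝ) + t + 3) ≠ 0 := by positivity
      have step : ∀ j ∈ Finset.range (t + 1),
          aseq (m + j) * (((t + 1 : ℕ) : ℝ) - j) * ∏ i ∈ Finset.range j, beta (m + i) =
            aseq (m + j) * ((t : ℝ) - j) * ∏ i ∈ Finset.range j, beta (m + i) +
              aseq (m + j) * ∏ i ∈ Finset.range j, beta (m + i) := by
        intro j _
        push_cast
        ring
      rw [Finset.sum_congr rfl step, Finset.sum_add_distrib, Finset.sum_range_succ _ t,
        ih, tele m hm (t + 1)]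
      rw [prod_beta m hm t]
      unfold aseq
      push_cast
      field_simp
      ring

theorem stmt_5 (k t : ℕ) (hk : 3 ≤ k) (ht1 : 1 ≤ t) (ht2 : t ≤ k - 2) :
    (t : ℝ) ^ 2 / ((k : ℝ) + 2) ≤ sigma2 k t := by
  set m : ℕ := k - t - 1 with hm_def
  have hm : 1 ≤ m := by omega
  have hk_eq : k = m + t + 1 := by omega
  have hform : sigma2 k t =
      (t : ℝ) - (m : ℝ) / 2 +
        ((m : ℝ) * ((m : ℝ) + 1) * ((m : ℝ) + 2)) /
          (2 * ((m : ℝ) + t + 1) * ((m : ℝ) + t + 2)) := by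
    rw [sigma2]
    exact sum_closed m hm t
  rw [hform]
  have hkR : (k : ℝ) = (m : ℝ) + t + 1 := by rw [hk_eq]; push_cast; ring
  rw [hkR]
  have hx : (1 : ℝ) ≤ (m : ℝ) := by exact_mod_cast hm
  have hy : (1 : ℝ) ≤ (t : ℝ) := by exact_mod_cast ht1
  set x : ℝ := (m : ℝ)
  set y : ℝ := (t : ℝ)
  have h1 : x + y + 1 ≠ 0 := by positivity
  have h2 : x + y + 2 ≠ 0 := by positivity
  have h3 : x + y + 1 + 2 ≠ 0 := by positivity
  rw [← sub_nonneg]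
  have key : (y - x / 2 + x * (x + 1) * (x + 2) / (2 * (x + y + 1) * (x + y + 2))) -
      y ^ 2 / (x + y + 1 + 2) =
      (12 * y + 18 * y ^ 2 + 6 * y ^ 3 + 13 * x * y + 12 * x * y ^ 2 + x * y ^ 3 +
        3 * x ^ 2 * y + x ^ 2 * y ^ 2) / (2 * (x + y + 1) * (x + y + 2) * (x + y + 3)) := by
    field_simp
    ring
  rw [key]
  have hx0 : 0 < x := by linarith
  have hy0 : 0 < y := by linarith
  positivity
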